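/- Let T be a tree and y a Fiedler vector of T with no zero entries. Then there exists exactly one edge (u,w) of T with y_u > 0 and y_w < 0 (the characteristic edge). -/

import Mathlib

open Matrix BigOperators

variable {V : Type*} [Fintype V] [DecidableEq V]

/-- The algebraic connectivity: the second smallest Laplacian eigenvalue, characterized
as the minimum Rayleigh quotient over nonzero vectors orthogonal to the all-ones vector. -/
noncomputable def algConn (G : SimpleGraph V) [DecidableRel G.Adj] : ℝ :=
  sInf {r : ℝ | ∃ x : V → ℝ, x ≠ 0 ∧ (∑ v, x v) = 0 ∧
    r = (x ⬝ᵥ (G.lapMatrix ℝ) *ᵥ x) / (x ⬝ᵥ x)}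

open SimpleGraph Finset

private lemma dot_lap_eq (T : SimpleGraph V) [DecidableRel T.Adj] (x z : V → ℝ) :
    x ⬝ᵥ (T.lapMatrix ℝ) *ᵥ z = ∑ a, ∑ b, if T.Adj a b then x a * (z a - z b) else 0 := by
  classical
  simp only [dotProduct, SimpleGraph.lapMatrix_mulVec_apply]
  refine Finset.sum_congr rfl fun a _ => ?_
  rw [T.degree_eq_sum_if_adj (R := ℝ) a, neighborFinset_eq_filter, Finset.sum_filter,
    Finset.sum_mul, mul_sub, Finset.mul_sum, Finset.mul_sum, ← Finset.sum_sub_distrib]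
  refine Finset.sum_congr rfl fun b _ => ?_
  by_cases h : T.Adj a b
  · simp [h]; ring
  · simp [h]

private lemma dot_lap_nonneg (T : SimpleGraph V) [DecidableRel T.Adj] (x : V → ℝ) :
    0 ≤ x ⬝ᵥ (T.lapMatrix ℝ) *ᵥ x := by
  have h := (SimpleGraph.posSemidef_lapMatrix ℝ T).dotProduct_mulVec_nonneg x
  simpa using h

private lemma dot_self_nonneg' (x : V → ℝ) : 0 ≤ x ⬝ᵥ x :=
  Finset.sum_nonneg fun v _ => mul_self_nonneg (x v)

private lemma algConn_bddBelow (T : SimpleGraph V) [DecidableRel T.Adj] :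
    BddBelow {r : ℝ | ∃ x : V → ℝ, x ≠ 0 ∧ (∑ v, x v) = 0 ∧
      r = (x ⬝ᵥ (T.lapMatrix ℝ) *ᵥ x) / (x ⬝ᵥ x)} := by
  refine ⟨0, fun r hr => ?_⟩
  obtain ⟨x, hx, -, rfl⟩ := hr
  exact div_nonneg (dot_lap_nonneg T x) (dot_self_nonneg' x)

private def posGraph (T : SimpleGraph V) (y : V → ℝ) : SimpleGraph V where
  Adj a b := T.Adj a b ∧ 0 < y a ∧ 0 < y b
  symm := ⟨fun a b h => ⟨h.1.symm, h.2.2, h.2.1⟩⟩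
  loopless := ⟨fun a h => T.loopless.irrefl a h.1⟩

private lemma posGraph_le (T : SimpleGraph V) (y : V → ℝ) : posGraph T y ≤ T :=
  fun _ _ h => h.1

private lemma walk_pos {T : SimpleGraph V} {y : V → ℝ} {a b : V}
    (w : (posGraph T y).Walk a b) (ha : 0 < y a) : 0 < y b := by
  induction w with
  | nil => exact ha
  | cons h _ ih => exact ih h.2.2

private lemma exists_frontier {T : SimpleGraph V} {C : V → Prop} {a b : V}
    (w : T.Walk a b) : C a → ¬ C b → ∃ p q, C p ∧ ¬ C q ∧ T.Adj p q := by
  induction w with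
  | nil => exact fun ha hb => absurd ha hb
  | @cons a c b h p ih =>
    intro ha hb
    by_cases hc : C c
    · exact ih hc hb
    · exact ⟨a, c, ha, hc, h⟩

private lemma key_ineq (T : SimpleGraph V) [DecidableRel T.Adj] (hT : T.IsTree)
    (y : V → ℝ) (heig : (T.lapMatrix ℝ) *ᵥ y = algConn T • y) (hnz : ∀ v, y v ≠ 0)
    (C : V → Prop) [DecidablePred C]
    (hCpos : ∀ v, C v → 0 < y v)
    (hclosed : ∀ a b, C a → T.Adj a b → 0 < y b → C b)
    (a0 : V) (ha0 : C a0) (b0 : V) (hb0 : ¬ C b0) :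
    (fun v => if C v then y v else 0) ⬝ᵥ (T.lapMatrix ℝ) *ᵥ (fun v => if C v then y v else 0)
      < algConn T *
        ((fun v => if C v then y v else 0) ⬝ᵥ (fun v => if C v then y v else 0)) := by
  classical
  set z : V → ℝ := fun v => if C v then y v else 0 with hz
  have hzy : z ⬝ᵥ (T.lapMatrix ℝ) *ᵥ y = algConn T * (z ⬝ᵥ z) := by
    rw [heig, dotProduct_smul, smul_eq_mul]
    congr 1
    refine Finset.sum_congr rfl fun v _ => ?_
    by_cases hc : C v <;> simp [hz, hc]
  have hterm : ∀ a b, 0 ≤ (if T.Adj a b then z a * (y a - y b) else 0)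
      - (if T.Adj a b then z a * (z a - z b) else 0) := by
    intro a b
    by_cases hadj : T.Adj a b
    · by_cases hCa : C a
      · by_cases hCb : C b
        · simp [hadj, hz, hCa, hCb]
        · have hyb : y b < 0 := by
            rcases (hnz b).lt_or_gt with h | h
            · exact h
            · exact absurd (hclosed a b hCa hadj h) hCb
          have : (if T.Adj a b then z a * (y a - y b) else 0)
              - (if T.Adj a b then z a * (z a - z b) else 0) = -(y a * y b) := by
            simp [hadj, hz, hCa, hCb]; ring
          rw [this]
          have := mul_pos (hCpos a hCa) (neg_pos.mpr hyb)
          nlinarith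
      · simp [hadj, hz, hCa]
    · simp [hadj]
  have htermstrict : ∀ p q, T.Adj p q → C p → ¬ C q →
      0 < (if T.Adj p q then z p * (y p - y q) else 0)
        - (if T.Adj p q then z p * (z p - z q) else 0) := by
    intro p q hadj hCp hCq
    have hyq : y q < 0 := by
      rcases (hnz q).lt_or_gt with h | h
      · exact h
      · exact absurd (hclosed p q hCp hadj h) hCq
    have : (if T.Adj p q then z p * (y p - y q) else 0)
        - (if T.Adj p q then z p * (z p - z q) else 0) = -(y p * y q) := by
      simp [hadj, hz, hCp, hCq]; ring
    rw [this]
    have := mul_pos (hCpos p hCp) (neg_pos.mpr hyq)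
    nlinarith
  have hdiff : 0 < z ⬝ᵥ (T.lapMatrix ℝ) *ᵥ y - z ⬝ᵥ (T.lapMatrix ℝ) *ᵥ z := by
    rw [dot_lap_eq, dot_lap_eq, ← Finset.sum_sub_distrib]
    simp_rw [← Finset.sum_sub_distrib]
    obtain ⟨p, q, hp, hq, hpq⟩ :=
      exists_frontier ((hT.isConnected.preconnected a0 b0).some) ha0 hb0
    refine Finset.sum_pos' (fun a _ => Finset.sum_nonneg fun b _ => hterm a b) ?_
    exact ⟨p, Finset.mem_univ p,
      Finset.sum_pos' (fun b _ => hterm p b)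
        ⟨q, Finset.mem_univ q, htermstrict p q hpq hp hq⟩⟩
  linarith [hzy, hdiff]

private lemma cross_zero (T : SimpleGraph V) [DecidableRel T.Adj] (y : V → ℝ)
    (C D : V → Prop) [DecidablePred C] [DecidablePred D]
    (hdisj : ∀ v, C v → D v → False)
    (hDpos : ∀ v, D v → 0 < y v)
    (hclosedC : ∀ a b, C a → T.Adj a b → 0 < y b → C b) :
    (fun v => if C v then y v else 0) ⬝ᵥ (T.lapMatrix ℝ) *ᵥ (fun v => if D v then y v else 0)
      = 0 := by
  rw [dot_lap_eq]
  refine Finset.sum_eq_zero fun a _ => Finset.sum_eq_zero fun b _ => ?_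
  by_cases hadj : T.Adj a b
  · by_cases hCa : C a
    · have hDa : ¬ D a := fun h => hdisj a hCa h
      have hDb : ¬ D b := fun h => hdisj b (hclosedC a b hCa hadj (hDpos b h)) h
      simp [hadj, hDa, hDb]
    · simp [hadj, hCa]
  · simp [hadj]

private lemma pos_reachable (T : SimpleGraph V) [DecidableRel T.Adj] (hT : T.IsTree)
    (y : V → ℝ) (heig : (T.lapMatrix ℝ) *ᵥ y = algConn T • y) (hnz : ∀ v, y v ≠ 0)
    {u1 u2 : V} (h1 : 0 < y u1) (h2 : 0 < y u2) : (posGraph T y).Reachable u1 u2 := by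
  classical
  by_contra hnr
  set C : V → Prop := fun v => (posGraph T y).Reachable u1 v with hC
  set D : V → Prop := fun v => (posGraph T y).Reachable u2 v with hD
  have hCpos : ∀ v, C v → 0 < y v := fun v h => h.elim fun w => walk_pos w h1
  have hDpos : ∀ v, D v → 0 < y v := fun v h => h.elim fun w => walk_pos w h2
  have hCclosed : ∀ a b, C a → T.Adj a b → 0 < y b → C b := fun a b hca hadj hyb =>
    hca.trans (SimpleGraph.Adj.reachable ⟨hadj, hCpos a hca, hyb⟩)
  have hDclosed : ∀ a b, D a → T.Adj a b → 0 < y b → D b := fun a b hda hadj hyb =>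
    hda.trans (SimpleGraph.Adj.reachable ⟨hadj, hDpos a hda, hyb⟩)
  have hdisj : ∀ v, C v → D v → False := fun v hc hd => hnr (hc.trans hd.symm)
  have hCu1 : C u1 := Reachable.refl u1
  have hDu2 : D u2 := Reachable.refl u2
  have hCu2 : ¬ C u2 := fun h => hnr h
  have hDu1 : ¬ D u1 := fun h => hnr h.symm
  set z1 : V → ℝ := fun v => if C v then y v else 0 with hz1
  set z2 : V → ℝ := fun v => if D v then y v else 0 with hz2
  have key1 : z1 ⬝ᵥ (T.lapMatrix ℝ) *ᵥ z1 < algConn T * (z1 ⬝ᵥ z1) :=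
    key_ineq T hT y heig hnz C hCpos hCclosed u1 hCu1 u2 hCu2
  have key2 : z2 ⬝ᵥ (T.lapMatrix ℝ) *ᵥ z2 < algConn T * (z2 ⬝ᵥ z2) :=
    key_ineq T hT y heig hnz D hDpos hDclosed u2 hDu2 u1 hDu1
  have cross12 : z1 ⬝ᵥ (T.lapMatrix ℝ) *ᵥ z2 = 0 :=
    cross_zero T y C D hdisj hDpos hCclosed
  have cross21 : z2 ⬝ᵥ (T.lapMatrix ℝ) *ᵥ z1 = 0 :=
    cross_zero T y D C (fun v hd hc => hdisj v hc hd) hCpos hDclosed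
  have dot12 : z1 ⬝ᵥ z2 = 0 := by
    refine Finset.sum_eq_zero fun v _ => ?_
    by_cases hc : C v
    · have : ¬ D v := fun h => hdisj v hc h
      simp [hz1, hz2, hc, this]
    · simp [hz1, hc]
  have dot21 : z2 ⬝ᵥ z1 = 0 := by rw [dotProduct_comm]; exact dot12
  set S1 : ℝ := ∑ v, z1 v with hS1
  set S2 : ℝ := ∑ v, z2 v with hS2
  have hS1pos : 0 < S1 := by
    refine Finset.sum_pos' (fun v _ => ?_) ⟨u1, Finset.mem_univ u1, ?_⟩
    · by_cases hc : C v
      · simp [hz1, hc]; exact (hCpos v hc).le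
      · simp [hz1, hc]
    · simp [hz1, hCu1]; exact h1
  have hS2pos : 0 < S2 := by
    refine Finset.sum_pos' (fun v _ => ?_) ⟨u2, Finset.mem_univ u2, ?_⟩
    · by_cases hc : D v
      · simp [hz2, hc]; exact (hDpos v hc).le
      · simp [hz2, hc]
    · simp [hz2, hDu2]; exact h2
  have n1pos : 0 < z1 ⬝ᵥ z1 := by
    refine Finset.sum_pos' (fun v _ => mul_self_nonneg _) ⟨u1, Finset.mem_univ u1, ?_⟩
    have : z1 u1 = y u1 := by simp [hz1, hCu1]
    rw [this]; exact mul_pos h1 h1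
  have n2pos : 0 < z2 ⬝ᵥ z2 := by
    refine Finset.sum_pos' (fun v _ => mul_self_nonneg _) ⟨u2, Finset.mem_univ u2, ?_⟩
    have : z2 u2 = y u2 := by simp [hz2, hDu2]
    rw [this]; exact mul_pos h2 h2
  set z : V → ℝ := S2 • z1 - S1 • z2 with hzd
  have hzsum : (∑ v, z v) = 0 := by
    simp only [hzd, Pi.sub_apply, Pi.smul_apply, smul_eq_mul, Finset.sum_sub_distrib,
      ← Finset.mul_sum, ← hS1, ← hS2]
    ring
  have hzu1 : z u1 = S2 * y u1 := by
    simp [hzd, hz1, hz2, hCu1, hDu1]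
  have hzne : z ≠ 0 := by
    intro h
    have := congrFun h u1
    rw [hzu1] at this
    simp only [Pi.zero_apply] at this
    nlinarith
  have hQz : z ⬝ᵥ (T.lapMatrix ℝ) *ᵥ z
      = S2^2 * (z1 ⬝ᵥ (T.lapMatrix ℝ) *ᵥ z1) + S1^2 * (z2 ⬝ᵥ (T.lapMatrix ℝ) *ᵥ z2) := by
    simp only [hzd, Matrix.mulVec_sub, Matrix.mulVec_smul, sub_dotProduct, dotProduct_sub,
      smul_dotProduct, dotProduct_smul, smul_eq_mul, cross12, cross21]
    ring
  have hzz : z ⬝ᵥ z = S2^2 * (z1 ⬝ᵥ z1) + S1^2 * (z2 ⬝ᵥ z2) := by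
    simp only [hzd, sub_dotProduct, dotProduct_sub, smul_dotProduct, dotProduct_smul,
      smul_eq_mul, dot12, dot21]
    ring
  have hzzpos : 0 < z ⬝ᵥ z := by
    rw [hzz]
    have := mul_pos (pow_pos hS2pos 2) n1pos
    have := mul_pos (pow_pos hS1pos 2) n2pos
    linarith
  have hQlt : z ⬝ᵥ (T.lapMatrix ℝ) *ᵥ z < algConn T * (z ⬝ᵥ z) := by
    rw [hQz, hzz]
    have h1' := mul_lt_mul_of_pos_left key1 (pow_pos hS2pos 2)
    have h2' := mul_lt_mul_of_pos_left key2 (pow_pos hS1pos 2)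
    nlinarith
  have hmem : (z ⬝ᵥ (T.lapMatrix ℝ) *ᵥ z) / (z ⬝ᵥ z) ∈
      {r : ℝ | ∃ x : V → ℝ, x ≠ 0 ∧ (∑ v, x v) = 0 ∧
        r = (x ⬝ᵥ (T.lapMatrix ℝ) *ᵥ x) / (x ⬝ᵥ x)} := ⟨z, hzne, hzsum, rfl⟩
  have hle : algConn T ≤ (z ⬝ᵥ (T.lapMatrix ℝ) *ᵥ z) / (z ⬝ᵥ z) :=
    csInf_le (algConn_bddBelow T) hmem
  rw [le_div_iff₀ hzzpos] at hle
  nlinarith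

private lemma adj_const_of_walk {T : SimpleGraph V} {x : V → ℝ}
    (h : ∀ i j, T.Adj i j → x i = x j) {a b : V} (w : T.Walk a b) : x a = x b := by
  induction w with
  | nil => rfl
  | cons ha _ ih => exact (h _ _ ha).trans ih

private lemma Qcont (T : SimpleGraph V) [DecidableRel T.Adj] :
    Continuous fun x : V → ℝ => x ⬝ᵥ (T.lapMatrix ℝ) *ᵥ x := by
  show Continuous fun x : V → ℝ => ∑ a, x a * ∑ b, T.lapMatrix ℝ a b * x b
  exact continuous_finset_sum _ fun a _ =>
    (continuous_apply a).mul (continuous_finset_sum _ fun b _ =>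
      continuous_const.mul (continuous_apply b))

private lemma dot_self_eq_sum_sq (x : V → ℝ) : x ⬝ᵥ x = ∑ v, (x v)^2 := by
  simp [dotProduct, sq]

private lemma algConn_pos (T : SimpleGraph V) [DecidableRel T.Adj] (hT : T.IsTree)
    (hcard : 2 ≤ Fintype.card V) : 0 < algConn T := by
  classical
  have hVne : Nonempty V := Fintype.card_pos_iff.mp (by omega)
  set K : Set (V → ℝ) := {x | (∑ v, x v) = 0 ∧ (∑ v, (x v)^2) = 1} with hK
  have hclosed : IsClosed K := by
    have h1 : Continuous fun x : V → ℝ => ∑ v, x v :=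
      continuous_finset_sum _ fun v _ => continuous_apply v
    have h2 : Continuous fun x : V → ℝ => ∑ v, (x v)^2 :=
      continuous_finset_sum _ fun v _ => (continuous_apply v).pow 2
    exact (isClosed_eq h1 continuous_const).inter (isClosed_eq h2 continuous_const)
  have hbdd : Bornology.IsBounded K := by
    rw [isBounded_iff_forall_norm_le]
    refine ⟨1, fun x hx => ?_⟩
    rw [pi_norm_le_iff_of_nonneg zero_le_one]
    intro v
    rw [Real.norm_eq_abs, ← sq_le_one_iff_abs_le_one]
    calc (x v)^2 ≤ ∑ u, (x u)^2 :=
          Finset.single_le_sum (fun u _ => sq_nonneg (x u)) (Finset.mem_univ v)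
    _ = 1 := hx.2
  have hcompact : IsCompact K := Metric.isCompact_iff_isClosed_bounded.mpr ⟨hclosed, hbdd⟩
  obtain ⟨v0, v1, hv01⟩ := Fintype.exists_pair_of_one_lt_card (α := V) (by omega)
  have hv10 : v1 ≠ v0 := hv01.symm
  have hKne : K.Nonempty := by
    set a : ℝ := (Real.sqrt 2)⁻¹ with ha
    have ha2 : a^2 = 2⁻¹ := by
      rw [ha, inv_pow, Real.sq_sqrt (by norm_num : (0:ℝ) ≤ 2)]
    refine ⟨fun v => if v = v0 then a else if v = v1 then -a else 0, ?_, ?_⟩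
    · have heq : ∀ v, (if v = v0 then a else if v = v1 then -a else 0)
          = (if v = v0 then a else 0) + (if v = v1 then -a else 0) := by
        intro v
        by_cases h0 : v = v0
        · subst h0; simp [hv01]
        · by_cases h1 : v = v1 <;> simp [h0, h1, hv10]
      simp only [heq, Finset.sum_add_distrib, Finset.sum_ite_eq', Finset.mem_univ, if_true]
      ring
    · have heq : ∀ v, ((if v = v0 then a else if v = v1 then -a else 0))^2
          = (if v = v0 then a^2 else 0) + (if v = v1 then a^2 else 0) := by
        intro v
        by_cases h0 : v = v0
        · subst h0; simp [hv01]
        · by_cases h1 : v = v1 <;> simp [h0, h1, hv10]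
      simp only [heq, Finset.sum_add_distrib, Finset.sum_ite_eq', Finset.mem_univ, if_true, ha2]
      norm_num
  obtain ⟨x0, hx0K, hmin⟩ := hcompact.exists_isMinOn hKne (Qcont T).continuousOn
  set m := x0 ⬝ᵥ (T.lapMatrix ℝ) *ᵥ x0 with hm
  have hge : 0 ≤ m := by
    have := (SimpleGraph.posSemidef_lapMatrix ℝ T).dotProduct_mulVec_nonneg x0
    simpa using this
  have hm0 : 0 < m := by
    rcases eq_or_lt_of_le hge with h | h
    · exfalso
      -- m = 0 → x0 constant → contradiction
      have hzero : Matrix.toLinearMap₂' ℝ (T.lapMatrix ℝ) x0 x0 = 0 := by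
        rw [Matrix.toLinearMap₂'_apply']; exact h.symm
      have hadj := (SimpleGraph.lapMatrix_toLinearMap₂'_apply'_eq_zero_iff_forall_adj ℝ T x0).mp hzero
      have hconst : ∀ v, x0 v = x0 v0 := fun v =>
        ((hT.isConnected.preconnected v v0).elim fun w => adj_const_of_walk hadj w)
      have hsum : (∑ v, x0 v) = (Fintype.card V : ℝ) * x0 v0 := by
        rw [Finset.sum_congr rfl fun v _ => hconst v]
        simp [Finset.card_univ, mul_comm]
      have hx00 : x0 v0 = 0 := by
        have h0 := hx0K.1
        rw [hsum] at h0
        have : (Fintype.card V : ℝ) ≠ 0 := by positivity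
        exact (mul_eq_zero.mp h0).resolve_left this
      have h1 := hx0K.2
      rw [Finset.sum_congr rfl fun v _ => by rw [hconst v, hx00]] at h1
      simp at h1
    · exact h
  refine lt_of_lt_of_le hm0 (le_csInf ?_ ?_)
  · refine ⟨m, x0, ?_, hx0K.1, ?_⟩
    · intro h0
      have := hx0K.2
      rw [h0] at this
      simp at this
    · rw [dot_self_eq_sum_sq, hx0K.2, div_one, hm]
  · rintro r ⟨x, hx, hsum, rfl⟩
    have ht2 : 0 < x ⬝ᵥ x := by
      have ⟨v, hv⟩ : ∃ v, x v ≠ 0 := by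
        by_contra hc; push_neg at hc; exact hx (funext hc)
      exact Finset.sum_pos' (fun v _ => mul_self_nonneg (x v))
        ⟨v, Finset.mem_univ v, mul_self_pos.2 hv⟩
    set s := Real.sqrt (x ⬝ᵥ x) with hs
    have hspos : 0 < s := Real.sqrt_pos.mpr ht2
    have hs2 : s^2 = x ⬝ᵥ x := Real.sq_sqrt ht2.le
    set u : V → ℝ := fun v => s⁻¹ * x v with hu
    have huK : u ∈ K := by
      constructor
      · show (∑ v, s⁻¹ * x v) = 0
        rw [← Finset.mul_sum, hsum, mul_zero]
      · show (∑ v, (s⁻¹ * x v)^2) = 1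
        have : ∀ v, (s⁻¹ * x v)^2 = s⁻¹^2 * (x v)^2 := fun v => by ring
        rw [Finset.sum_congr rfl fun v _ => this v, ← Finset.mul_sum,
          ← dot_self_eq_sum_sq, ← hs2]
        field_simp
    have hQu : u ⬝ᵥ (T.lapMatrix ℝ) *ᵥ u = s⁻¹^2 * (x ⬝ᵥ (T.lapMatrix ℝ) *ᵥ x) := by
      have hu' : u = s⁻¹ • x := rfl
      rw [hu', Matrix.mulVec_smul, smul_dotProduct, dotProduct_smul]
      simp [smul_eq_mul]; ring
    have hle : m ≤ s⁻¹^2 * (x ⬝ᵥ (T.lapMatrix ℝ) *ᵥ x) := by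
      have h := isMinOn_iff.mp hmin u huK
      rwa [hQu] at h
    have heq2 : s⁻¹ ^ 2 * (x ⬝ᵥ (T.lapMatrix ℝ) *ᵥ x) = (x ⬝ᵥ (T.lapMatrix ℝ) *ᵥ x) / (x ⬝ᵥ x) := by
      rw [← hs2]; field_simp
    linarith

private lemma sum_lap_mulVec_eq_zero (T : SimpleGraph V) [DecidableRel T.Adj] (y : V → ℝ) :
    ∑ v, ((T.lapMatrix ℝ) *ᵥ y) v = 0 := by
  classical
  have h : ∑ v, ((T.lapMatrix ℝ) *ᵥ y) v = (fun _ => (1:ℝ)) ⬝ᵥ (T.lapMatrix ℝ) *ᵥ y := by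
    simp [dotProduct]
  rw [h, dot_lap_eq]
  have h2 : (∑ a, ∑ b, if T.Adj a b then (1:ℝ) * (y a - y b) else 0)
      = -(∑ a, ∑ b, if T.Adj a b then (1:ℝ) * (y a - y b) else 0) := by
    conv_lhs => rw [Finset.sum_comm]
    rw [← Finset.sum_neg_distrib]
    refine Finset.sum_congr rfl fun a _ => ?_
    rw [← Finset.sum_neg_distrib]
    refine Finset.sum_congr rfl fun b _ => ?_
    by_cases h : T.Adj a b
    · simp [h, T.adj_comm a b |>.mp h]
    · have h' : ¬ T.Adj b a := fun hh => h ((T.adj_comm a b).mpr hh)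
      simp [h, h']
  linarith [h2]

private lemma exists_cross (T : SimpleGraph V) (y : V → ℝ)
    (hnz : ∀ v, y v ≠ 0) {a b : V} (w : T.Walk a b) :
    0 < y a → y b < 0 → ∃ u w', T.Adj u w' ∧ 0 < y u ∧ y w' < 0 := by
  induction w with
  | nil => exact fun h1 h2 => absurd (h1.trans h2) (lt_irrefl 0)
  | @cons a c b h p ih =>
    intro ha hb
    rcases (hnz c).lt_or_gt with hc | hc
    · exact ⟨a, c, h, ha, hc⟩
    · exact ih hc hb

theorem stmt12 (T : SimpleGraph V) [DecidableRel T.Adj] (hT : T.IsTree)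
    (hcard : 2 ≤ Fintype.card V)
    (y : V → ℝ) (hy : y ≠ 0)
    (heig : (T.lapMatrix ℝ) *ᵥ y = algConn T • y)
    (hnz : ∀ v, y v ≠ 0) :
    ∃ u w : V, T.Adj u w ∧ 0 < y u ∧ y w < 0 ∧
      ∀ u' w' : V, T.Adj u' w' → 0 < y u' → y w' < 0 → u' = u ∧ w' = w := by
  classical
  have hVne : Nonempty V := Fintype.card_pos_iff.mp (by omega)
  have hlpos : 0 < algConn T := algConn_pos T hT hcard
  have hsum0 : (∑ v, y v) = 0 := by
    have h1 : ∑ v, ((T.lapMatrix ℝ) *ᵥ y) v = 0 := sum_lap_mulVec_eq_zero T y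
    rw [heig] at h1
    simp only [Pi.smul_apply, smul_eq_mul, ← Finset.mul_sum] at h1
    exact (mul_eq_zero.mp h1).resolve_left (ne_of_gt hlpos)
  have hexpos : ∃ v, 0 < y v := by
    by_contra h; push_neg at h
    have hneg : ∀ v, y v < 0 := fun v => lt_of_le_of_ne (h v) (hnz v)
    have h2 : (∑ v, y v) < 0 :=
      Finset.sum_neg (fun v _ => hneg v) Finset.univ_nonempty
    rw [hsum0] at h2; exact lt_irrefl 0 h2
  have hexneg : ∃ v, y v < 0 := by
    by_contra h; push_neg at h
    have hpos : ∀ v, 0 < y v := fun v => lt_of_le_of_ne (h v) (Ne.symm (hnz v))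
    have h2 : 0 < (∑ v, y v) :=
      Finset.sum_pos (fun v _ => hpos v) Finset.univ_nonempty
    rw [hsum0] at h2; exact lt_irrefl 0 h2
  obtain ⟨vp, hvp⟩ := hexpos
  obtain ⟨vn, hvn⟩ := hexneg
  obtain ⟨u, w, hadj, hyu, hyw⟩ :=
    exists_cross T y hnz ((hT.isConnected.preconnected vp vn).some) hvp hvn
  refine ⟨u, w, hadj, hyu, hyw, ?_⟩
  intro u' w' hadj' hpos' hneg'
  by_contra hne
  have hSym2ne : s(u', w') ≠ s(u, w) := by
    intro h
    rw [Sym2.eq_iff] at h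
    rcases h with ⟨h1, h2⟩ | ⟨h1, h2⟩
    · exact hne ⟨h1, h2⟩
    · rw [h1] at hpos'; exact absurd hpos' (not_lt.mpr hyw.le)
  have heig' : (T.lapMatrix ℝ) *ᵥ (-y) = algConn T • (-y) := by
    rw [Matrix.mulVec_neg, heig, smul_neg]
  have hnz' : ∀ v, (-y) v ≠ 0 := fun v => neg_ne_zero.mpr (hnz v)
  obtain ⟨wp⟩ := pos_reachable T hT y heig hnz hyu hpos'
  obtain ⟨wn⟩ := pos_reachable T hT (-y) heig' hnz'
    (by simpa using hneg') (by simpa using hyw)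
  set W : T.Walk u w := (wp.mapLe (posGraph_le T y)).append
      (SimpleGraph.Walk.cons hadj' (wn.mapLe (posGraph_le T (-y)))) with hW
  have hWedges : s(u, w) ∉ W.edges := by
    intro hmem
    rw [hW, SimpleGraph.Walk.edges_append, List.mem_append] at hmem
    rcases hmem with hmem | hmem
    · have hmem' : s(u,w) ∈ wp.edges := by
        simpa [SimpleGraph.Walk.edges_map, Sym2.map_id] using hmem
      have h3 := wp.edges_subset_edgeSet hmem'
      rw [SimpleGraph.mem_edgeSet] at h3
      exact absurd h3.2.2 (not_lt.mpr hyw.le)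
    · rw [SimpleGraph.Walk.edges_cons, List.mem_cons] at hmem
      rcases hmem with hmem | hmem
      · exact hSym2ne hmem.symm
      · have hmem' : s(u,w) ∈ wn.edges := by
          simpa [SimpleGraph.Walk.edges_map, Sym2.map_id] using hmem
        have h3 := wn.edges_subset_edgeSet hmem'
        rw [SimpleGraph.mem_edgeSet] at h3
        have h4 := h3.2.1
        simp only [Pi.neg_apply, neg_pos] at h4
        exact absurd hyu (not_lt.mpr h4.le)
  set p : T.Path w u := W.toPath.reverse with hp
  have hpe : s(u, w) ∉ (p : T.Walk w u).edges := by
    intro hmem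
    rw [hp] at hmem
    have : s(u,w) ∈ (W.toPath : T.Walk u w).edges := by
      rcases SimpleGraph.Path.reverse W.toPath with _
      simpa [SimpleGraph.Walk.edges_reverse] using hmem
    exact hWedges (SimpleGraph.Walk.edges_toPath_subset W this)
  have hcyc := SimpleGraph.Path.cons_isCycle p hadj hpe
  exact hT.IsAcyclic _ hcyc
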